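/- Let V = (v_s : s ∈ S) ⊂ k^d span k^d. For each hyperplane H of V with defining linear form ℓ_H and ρ_H = |V ∖ H|, the power ℓ_H^{ρ_H} lies in the kernel of the homomorphism φ_V : k[x_1,...,x_d] → B(V), x_j ↦ ∑_{s∈S} (v_s)_j y_s, where B(V) is k[y_s : s ∈ S] modulo all y_s^2 and all cocircuit monomials ∏_{s∈T} y_s. Hence I(V) ⊆ ker φ_V. -/

import Mathlib

open Finset MvPolynomial
attribute [local instance] Classical.propDecidable

variable {S : Type*} [Fintype S] [DecidableEq S]

/-- `T` is a partial transversal of the set system `A = (A j : j ∈ [d])`: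
its elements can be matched injectively to distinct members of `A` containing them. -/
def IsPT {d : ℕ} (A : Fin d → Finset S) (T : Finset S) : Prop :=
  ∃ f : S → Fin d, Set.InjOn f ↑T ∧ ∀ s ∈ T, s ∈ A (f s)

/-- Rank function of the transversal matroid `M(A)`:
the maximum size of a partial transversal contained in `T`. -/
noncomputable def tRk {d : ℕ} (A : Fin d → Finset S) (T : Finset S) : ℕ :=
  (T.powerset.filter (IsPT A)).sup Finset.card

/-- Rank function of the dual matroid `M(A)*`: `rk*(T) = rk(S∖T) + |T| − rk(S)`. -/
noncomputable def dualRk {d : ℕ} (A : Fin d → Finset S) (T : Finset S) : ℕ :=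
  tRk A Tᶜ + T.card - tRk A (univ : Finset S)

/-- Lattice points of the parking polymatroid `P(A)`. -/
def inP {d : ℕ} (A : Fin d → Finset S) (q : Fin d →₀ ℕ) : Prop :=
  ∀ J : Finset (Fin d), ∑ j ∈ J, q j ≤ dualRk A (J.biUnion A)

/-- Rank function of the matroid of a vector configuration:
the columns `v_s` of the matrix `V`. -/
noncomputable def vRk {k : Type*} [Field k] {d : ℕ} (V : Matrix (Fin d) S k) (T : Finset S) : ℕ :=
  Module.finrank k (Submodule.span k ((fun s j => V j s) '' (T : Set S)))

/-- The power ideal `I(V)`, generated by `ℓ_H ^ ρ_H` over all hyperplanes `H` of `V`: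
a hyperplane is cut out by a nonzero linear form `ℓ` such that the vectors it kills span a
rank-`(d−1)` subspace, and `ρ_H` is the number of vectors of `V` outside `H`. -/
noncomputable def powerIdeal {k : Type*} [Field k] {d : ℕ} (V : Matrix (Fin d) S k) :
    Ideal (MvPolynomial (Fin d) k) :=
  Ideal.span { p | ∃ ℓ : Fin d → k, ℓ ≠ 0 ∧
    vRk V ((univ : Finset S).filter fun s => ∑ j, ℓ j * V j s = 0) = d - 1 ∧
    p = (∑ j, C (ℓ j) * X j) ^ (((univ : Finset S).filter fun s => ¬ (∑ j, ℓ j * V j s = 0)).card) }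

/-- `T` is a cocircuit of the matroid of `V`: the complement of a hyperplane flat. -/
noncomputable def IsCocircuitV {k : Type*} [Field k] {d : ℕ} (V : Matrix (Fin d) S k)
    (T : Finset S) : Prop :=
  vRk V Tᶜ = vRk V (univ : Finset S) - 1 ∧
    ∀ s ∈ T, vRk V (insert s Tᶜ) = vRk V (univ : Finset S)

/-- The ideal of relations defining the squarefree algebra `B(V)`. -/
noncomputable def relIdealV {k : Type*} [Field k] {d : ℕ} (V : Matrix (Fin d) S k) :
    Ideal (MvPolynomial S k) :=
  Ideal.span ({ p | ∃ s : S, p = X s ^ 2 } ∪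
    { p | ∃ T : Finset S, IsCocircuitV V T ∧ p = ∏ s ∈ T, X s })

/-- Absorption: multiplying a member of `span (squares ∪ {g})` by `r` with `r*g ∈ I`. -/
lemma mul_mem_span_aux {k : Type*} [CommRing k] (I : Ideal (MvPolynomial S k))
    (g r : MvPolynomial S k)
    (hSq : ∀ s : S, (X s : MvPolynomial S k) ^ 2 ∈ I) (hg : r * g ∈ I)
    (q : MvPolynomial S k)
    (hq : q ∈ Ideal.span ({ p : MvPolynomial S k | ∃ s : S, p = X s ^ 2 } ∪ {g})) :
    r * q ∈ I := by
  induction hq using Submodule.span_induction with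
  | mem x hx =>
    rcases hx with ⟨s, rfl⟩ | rfl
    · exact Ideal.mul_mem_left _ r (hSq s)
    · exact hg
  | zero => simp
  | add x y _ _ hx hy => rw [mul_add]; exact Ideal.add_mem _ hx hy
  | smul c x _ hx =>
    rw [smul_eq_mul, mul_comm c x, ← mul_assoc]
    exact Ideal.mul_mem_right _ _ hx

lemma key_pow_mem {k : Type*} [CommRing k] (a : S → k) (T : Finset S) :
    (∑ s ∈ T, C (a s) * X s) ^ T.card ∈
      Ideal.span ({ p : MvPolynomial S k | ∃ s : S, p = X s ^ 2 } ∪ {∏ s ∈ T, X s}) := by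
  induction T using Finset.induction_on with
  | empty =>
    simp only [Finset.sum_empty, Finset.card_empty, pow_zero, Finset.prod_empty]
    exact Ideal.subset_span (Or.inr rfl)
  | @insert t T' ht IH =>
    set I := Ideal.span ({ p : MvPolynomial S k | ∃ s : S, p = X s ^ 2 }
      ∪ {∏ s ∈ insert t T', X s}) with hI
    have hSq : ∀ s : S, (X s : MvPolynomial S k) ^ 2 ∈ I :=
      fun s => Ideal.subset_span (Or.inl ⟨s, rfl⟩)
    have hprod : (∏ s ∈ insert t T', (X s : MvPolynomial S k)) ∈ I :=
      Ideal.subset_span (Or.inr rfl)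
    set P : MvPolynomial S k := ∑ s ∈ T', C (a s) * X s with hP
    -- r * ∏_{T'} X ∈ I for r = X t and r = P
    have hXt : (X t : MvPolynomial S k) * ∏ s ∈ T', X s ∈ I := by
      rw [← Finset.prod_insert ht]; exact hprod
    have hPg : P * ∏ s ∈ T', (X s : MvPolynomial S k) ∈ I := by
      rw [hP, Finset.sum_mul]
      refine Ideal.sum_mem _ fun s hs => ?_
      have : (C (a s) * X s) * ∏ u ∈ T', (X u : MvPolynomial S k)
          = C (a s) * ((∏ u ∈ T'.erase s, X u) * X s ^ 2) := by
        rw [← Finset.mul_prod_erase T' _ hs]; ring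
      rw [this]
      exact Ideal.mul_mem_left _ _ (Ideal.mul_mem_left _ _ (hSq s))
    rw [Finset.sum_insert ht, Finset.card_insert_of_notMem ht,
      add_pow (C (a t) * X t) P (T'.card + 1)]
    refine Ideal.sum_mem _ fun i hi => ?_
    rcases Nat.lt_or_ge i 2 with h2 | h2
    · interval_cases i
      · -- i = 0 : term is P^(n+1) * choose
        have heq : (C (a t) * X t : MvPolynomial S k) ^ 0 * P ^ (T'.card + 1 - 0)
            * ((T'.card + 1).choose 0 : MvPolynomial S k)
            = ((T'.card + 1).choose 0 : MvPolynomial S k) * (P * P ^ T'.card) := by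
          rw [pow_zero, Nat.sub_zero, pow_succ']; ring
        rw [heq]
        exact Ideal.mul_mem_left _ _
          (mul_mem_span_aux I (∏ s ∈ T', X s) P hSq hPg _ IH)
      · -- i = 1
        have heq : (C (a t) * X t : MvPolynomial S k) ^ 1 * P ^ (T'.card + 1 - 1)
            * ((T'.card + 1).choose 1 : MvPolynomial S k)
            = (C (a t) * ((T'.card + 1).choose 1 : MvPolynomial S k))
              * (X t * P ^ T'.card) := by
          have h1 : T'.card + 1 - 1 = T'.card := by omega
          rw [h1, pow_one]; ring
        rw [heq]
        exact Ideal.mul_mem_left _ _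
          (mul_mem_span_aux I (∏ s ∈ T', X s) (X t) hSq hXt _ IH)
    · -- i ≥ 2
      have hsplit : (X t : MvPolynomial S k) ^ i = X t ^ (i - 2) * X t ^ 2 := by
        rw [← pow_add]; congr 1; omega
      have heq : (C (a t) * X t : MvPolynomial S k) ^ i * P ^ (T'.card + 1 - i)
          * ((T'.card + 1).choose i : MvPolynomial S k)
          = (C (a t) ^ i * X t ^ (i - 2) * P ^ (T'.card + 1 - i)
              * ((T'.card + 1).choose i : MvPolynomial S k)) * X t ^ 2 := by
        rw [mul_pow, hsplit]; ring
      rw [heq]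
      exact Ideal.mul_mem_left _ _ (hSq t)

lemma cocirc_aux {k : Type*} [Field k] {d : ℕ} (V : Matrix (Fin d) S k)
    (hspan : vRk V (univ : Finset S) = d) (ℓ : Fin d → k) (hℓ : ℓ ≠ 0)
    (hd1 : vRk V ((univ : Finset S).filter fun s => ∑ j, ℓ j * V j s = 0) = d - 1) :
    IsCocircuitV V ((univ : Finset S).filter fun s => ¬ (∑ j, ℓ j * V j s = 0)) := by
  obtain ⟨j0, hj0⟩ := Function.ne_iff.mp hℓ
  simp only [Pi.zero_apply] at hj0
  have hdpos : 1 ≤ d := j0.pos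
  have hcompl : ((univ : Finset S).filter fun s => ¬ (∑ j, ℓ j * V j s = 0))ᶜ
      = (univ : Finset S).filter fun s => ∑ j, ℓ j * V j s = 0 := by
    ext s; simp
  -- the linear functional with kernel the hyperplane
  set f : (Fin d → k) →ₗ[k] k := ∑ j, ℓ j • LinearMap.proj j with hf
  have hfa : ∀ w : Fin d → k, f w = ∑ j, ℓ j * w j := by
    intro w
    simp [hf, LinearMap.sum_apply, LinearMap.smul_apply, smul_eq_mul]
  have hsingle : f (Pi.single j0 1) = ℓ j0 := by
    rw [hfa]
    rw [Finset.sum_eq_single j0 (fun b _ hb => by simp [Pi.single_eq_of_ne hb]) (by simp)]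
    simp
  have hsurj : Function.Surjective f := by
    intro cc
    refine ⟨(cc / ℓ j0) • (Pi.single j0 1 : Fin d → k), ?_⟩
    rw [map_smul, hsingle, smul_eq_mul, div_mul_cancel₀ _ hj0]
  have hrange : LinearMap.range f = ⊤ := LinearMap.range_eq_top.mpr hsurj
  have hker : Module.finrank k (LinearMap.ker f) = d - 1 := by
    have h1 := LinearMap.finrank_range_add_finrank_ker f
    rw [hrange, finrank_top, Module.finrank_self, Module.finrank_pi, Fintype.card_fin] at h1
    omega
  have hKle : Submodule.span k ((fun s j => V j s) ''
      (((univ : Finset S).filter fun s => ∑ j, ℓ j * V j s = 0) : Set S)) ≤ LinearMap.ker f := by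
    rw [Submodule.span_le]
    rintro x ⟨s, hs, rfl⟩
    simp only [Finset.coe_filter, Set.mem_setOf_eq] at hs
    rw [SetLike.mem_coe, LinearMap.mem_ker, hfa]
    exact hs.2
  have hKeq : Submodule.span k ((fun s j => V j s) ''
      (((univ : Finset S).filter fun s => ∑ j, ℓ j * V j s = 0) : Set S)) = LinearMap.ker f := by
    refine Submodule.eq_of_le_of_finrank_eq hKle ?_
    rw [hker]
    exact hd1
  constructor
  · rw [hcompl, hd1, hspan]
  · intro s hs
    rw [hcompl, hspan]
    have hcs : ¬ (∑ j, ℓ j * V j s = 0) := (Finset.mem_filter.mp hs).2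
    unfold vRk
    rw [Finset.coe_insert]
    set W := Submodule.span k ((fun s j => V j s) ''
      (insert s ((((univ : Finset S).filter fun s => ∑ j, ℓ j * V j s = 0) : Finset S) : Set S))) with hW
    have hle : LinearMap.ker f ≤ W := by
      rw [← hKeq]
      exact Submodule.span_mono (Set.image_mono (Set.subset_insert _ _))
    have hmem : (fun j => V j s) ∈ W := by
      apply Submodule.subset_span
      exact ⟨s, by simp, rfl⟩
    have hnot : (fun j => V j s) ∉ LinearMap.ker f := by
      rw [LinearMap.mem_ker, hfa]
      exact hcs
    have hlt : LinearMap.ker f < W := hle.lt_of_ne (fun h => hnot (h ▸ hmem))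
    have h2 := Submodule.finrank_lt_finrank_of_lt hlt
    have h3 : Module.finrank k W ≤ d := by
      have := Submodule.finrank_le W
      rwa [Module.finrank_pi, Fintype.card_fin] at this
    rw [hker] at h2
    omega

/-- Each generator `ℓ_H^{ρ_H}` of the power ideal lies in the kernel of
`φ_V : x_j ↦ ∑_s (v_s)_j y_s` into `B(V)`; hence `I(V) ⊆ ker φ_V`. -/
theorem stmt12 {k : Type*} [Field k] {d : ℕ} (V : Matrix (Fin d) S k)
    (hspan : vRk V (univ : Finset S) = d) :
    (∀ ℓ : Fin d → k, ℓ ≠ 0 →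
      vRk V ((univ : Finset S).filter fun s => ∑ j, ℓ j * V j s = 0) = d - 1 →
      aeval (fun j => Ideal.Quotient.mk (relIdealV V) (∑ s, C (V j s) * X s))
        ((∑ j, C (ℓ j) * X j) ^
          (((univ : Finset S).filter fun s => ¬ (∑ j, ℓ j * V j s = 0)).card)) = 0) ∧
      powerIdeal V ≤ RingHom.ker
        (aeval (fun j => Ideal.Quotient.mk (relIdealV V) (∑ s, C (V j s) * X s))
          : MvPolynomial (Fin d) k →ₐ[k] _).toRingHom := by
  have main : ∀ ℓ : Fin d → k, ℓ ≠ 0 →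
      vRk V ((univ : Finset S).filter fun s => ∑ j, ℓ j * V j s = 0) = d - 1 →
      aeval (fun j => Ideal.Quotient.mk (relIdealV V) (∑ s, C (V j s) * X s))
        ((∑ j, C (ℓ j) * X j) ^
          (((univ : Finset S).filter fun s => ¬ (∑ j, ℓ j * V j s = 0)).card)) = 0 := by
    intro ℓ hℓ hd1
    set g : Fin d → MvPolynomial S k := fun j => ∑ s, C (V j s) * X s with hg
    set T : Finset S := (univ : Finset S).filter fun s => ¬ (∑ j, ℓ j * V j s = 0) with hT
    have hmk : (fun j => Ideal.Quotient.mk (relIdealV V) (g j))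
        = fun j => (Ideal.Quotient.mkₐ k (relIdealV V)) (g j) := by
      funext j; rw [Ideal.Quotient.mkₐ_eq_mk]
    rw [hmk, ← comp_aeval_apply g (Ideal.Quotient.mkₐ k (relIdealV V))
      ((∑ j, C (ℓ j) * X j) ^ T.card), Ideal.Quotient.mkₐ_eq_mk,
      Ideal.Quotient.eq_zero_iff_mem]
    have heval : (aeval g) (∑ j, C (ℓ j) * X j)
        = ∑ s ∈ T, C (∑ j, ℓ j * V j s) * X s := by
      have hsum : ∑ s ∈ (univ : Finset S).filter (fun s => ¬ (∑ j, ℓ j * V j s = 0)),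
          C (∑ j, ℓ j * V j s) * X s
          = ∑ s : S, C (∑ j, ℓ j * V j s) * (X s : MvPolynomial S k) := by
        apply Finset.sum_subset (Finset.subset_univ _)
        intro x _ hx
        have hx0 : (∑ j, ℓ j * V j x) = 0 := by simpa using hx
        rw [hx0]; simp
      rw [hT, hsum]
      rw [map_sum]
      simp only [map_mul, aeval_C, aeval_X, algebraMap_eq, hg]
      simp only [Finset.mul_sum]
      rw [Finset.sum_comm]
      refine Finset.sum_congr rfl fun s _ => ?_
      simp only [map_sum, Finset.sum_mul, C_mul, mul_assoc]
    rw [map_pow, heval]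
    have hincl : ({ p : MvPolynomial S k | ∃ s : S, p = X s ^ 2 } ∪ {∏ s ∈ T, X s})
        ⊆ ({ p : MvPolynomial S k | ∃ s : S, p = X s ^ 2 } ∪
          { p | ∃ T : Finset S, IsCocircuitV V T ∧ p = ∏ s ∈ T, X s }) := by
      rintro p (hp | hp)
      · exact Set.mem_union_left _ hp
      · exact Set.mem_union_right _ ⟨T, hT ▸ cocirc_aux V hspan ℓ hℓ hd1, hp⟩
    exact Ideal.span_mono hincl (key_pow_mem (fun s => ∑ j, ℓ j * V j s) T)
  refine ⟨main, ?_⟩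
  rw [powerIdeal, Ideal.span_le]
  rintro p ⟨ℓ, hℓ, hrk, rfl⟩
  rw [SetLike.mem_coe, RingHom.mem_ker]
  exact main ℓ hℓ hrk
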